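/- arXiv:2108.00514 — 3 statements merged into one kernel-verified Lean document; each statement's English description precedes it below -/
import Mathlib

section
/- Let G be a chemical reaction network with complexes C ⊂ ℤ_{≥0}^d, reactions R ⊂ C × C, and rate constants κ_{a,b} > 0, with Hamiltonian H(x,p) = ∑_{(a,b)∈R} κ_{a,b} x^a (e^{⟨b−a, p⟩} − 1). Let c ∈ ℝ_{>0}^d satisfy the complex-balance condition: for every z ∈ C, ∑_{a:(a,z)∈R} κ_{a,z} c^a = ∑_{b:(z,b)∈R} κ_{z,b} c^z. Then V(x) = ∑_{i=1}^d (x_i log(x_i/c_i) − x_i + c_i) satisfies H(x, ∇V(x)) = 0 for all x ∈ ℝ_{>0}^d. -/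
open Finset

/-- CRN Hamiltonian: reactions indexed by `ι`, each with source complex `src i`,
target complex `tgt i`, and rate constant `κ i`. -/
noncomputable def crnH {d : ℕ} {ι : Type*} [Fintype ι]
    (src tgt : ι → Fin d → ℕ) (κ : ι → ℝ) (x p : Fin d → ℝ) : ℝ :=
  ∑ i, κ i * (∏ j, x j ^ src i j) *
    (Real.exp (∑ j, ((tgt i j : ℝ) - (src i j : ℝ)) * p j) - 1)

theorem complex_balanced_implies_hjb
    {d : ℕ} {ι : Type*} [Fintype ι] [DecidableEq (Fin d → ℕ)]
    (src tgt : ι → Fin d → ℕ) (κ : ι → ℝ) (hκ : ∀ i, 0 < κ i)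
    (c : Fin d → ℝ) (hc : ∀ j, 0 < c j)
    (hbal : ∀ z : Fin d → ℕ,
      ∑ i ∈ univ.filter (fun i => tgt i = z), κ i * ∏ j, c j ^ src i j =
      ∑ i ∈ univ.filter (fun i => src i = z), κ i * ∏ j, c j ^ z j) :
    ∀ x : Fin d → ℝ, (∀ j, 0 < x j) →
      crnH src tgt κ x (fun j => Real.log (x j / c j)) = 0 := by
  intro x hx
  set f : (Fin d → ℕ) → ℝ := fun z => ∏ j, (x j / c j) ^ z j with hf
  have hfpos : ∀ z, 0 < f z := fun z =>
    Finset.prod_pos fun j _ => pow_pos (div_pos (hx j) (hc j)) _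
  have hexp : ∀ i, Real.exp (∑ j, ((tgt i j : ℝ) - (src i j : ℝ)) * Real.log (x j / c j))
      = f (tgt i) / f (src i) := by
    intro i
    rw [Real.exp_sum, hf, ← Finset.prod_div_distrib]
    refine Finset.prod_congr rfl fun j _ => ?_
    have hr : 0 < x j / c j := div_pos (hx j) (hc j)
    have key : ∀ n : ℕ, Real.exp ((n : ℝ) * Real.log (x j / c j)) = (x j / c j) ^ n := by
      intro n
      rw [Real.exp_nat_mul, Real.exp_log hr]
    rw [sub_mul, Real.exp_sub, key, key]
  have hxa : ∀ (z : Fin d → ℕ), (∏ j, x j ^ z j) = (∏ j, c j ^ z j) * f z := by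
    intro z
    rw [hf, ← Finset.prod_mul_distrib]
    refine Finset.prod_congr rfl fun j _ => ?_
    rw [← mul_pow, mul_div_cancel₀ _ (hc j).ne']
  have hterm : ∀ i : ι, κ i * (∏ j, x j ^ src i j) *
      (Real.exp (∑ j, ((tgt i j : ℝ) - (src i j : ℝ)) * Real.log (x j / c j)) - 1)
      = κ i * (∏ j, c j ^ src i j) * f (tgt i)
        - κ i * (∏ j, c j ^ src i j) * f (src i) := by
    intro i
    rw [hexp i, hxa]
    have h1 : f (src i) ≠ 0 := (hfpos _).ne'
    field_simp
  unfold crnH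
  simp only [hterm]
  set S : Finset (Fin d → ℕ) := (univ.image tgt) ∪ (univ.image src) with hS
  have htS : ∀ i : ι, i ∈ (univ : Finset ι) → tgt i ∈ S := fun i _ => by
    simp [hS]
  have hsS : ∀ i : ι, i ∈ (univ : Finset ι) → src i ∈ S := fun i _ => by
    simp [hS]
  rw [Finset.sum_sub_distrib,
    ← Finset.sum_fiberwise_of_maps_to htS (fun i => κ i * (∏ j, c j ^ src i j) * f (tgt i)),
    ← Finset.sum_fiberwise_of_maps_to hsS (fun i => κ i * (∏ j, c j ^ src i j) * f (src i)),
    ← Finset.sum_sub_distrib]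
  refine Finset.sum_eq_zero fun z hz => ?_
  have e1 : ∑ i ∈ univ.filter (fun i => tgt i = z), κ i * (∏ j, c j ^ src i j) * f (tgt i)
      = (∑ i ∈ univ.filter (fun i => tgt i = z), κ i * ∏ j, c j ^ src i j) * f z := by
    rw [Finset.sum_mul]
    refine Finset.sum_congr rfl fun i hi => ?_
    rw [(Finset.mem_filter.mp hi).2]
  have e2 : ∑ i ∈ univ.filter (fun i => src i = z), κ i * (∏ j, c j ^ src i j) * f (src i)
      = (∑ i ∈ univ.filter (fun i => src i = z), κ i * ∏ j, c j ^ z j) * f z := by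
    rw [Finset.sum_mul]
    refine Finset.sum_congr rfl fun i hi => ?_
    rw [(Finset.mem_filter.mp hi).2]
  rw [e1, e2, hbal z, sub_self]
end

section
/- Let G be a CRN with Hamiltonian H(x,p) = ∑_{(a,b)∈R} κ_{a,b} x^a (e^{⟨b−a,p⟩} − 1) and let c ∈ ℝ_{>0}^d. If V(x) = ∑ᵢ(xᵢ log(xᵢ/cᵢ) − xᵢ + cᵢ) satisfies H(x, ∇V(x)) = 0 for all x ∈ ℝ_{>0}^d, then c satisfies the complex-balance condition: for every complex z ∈ C, ∑_{a:(a,z)∈R} κ_{a,z} c^a = ∑_{b:(z,b)∈R} κ_{z,b} c^z. -/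
open Finset MvPolynomial

lemma mv_zero_of_pos : ∀ (d : ℕ) (p : MvPolynomial (Fin d) ℝ),
    (∀ y : Fin d → ℝ, (∀ j, 0 < y j) → eval y p = 0) → p = 0 := by
  intro d
  induction d with
  | zero =>
    intro p h
    obtain ⟨a, rfl⟩ : ∃ a, p = MvPolynomial.C a := ⟨_, p.eq_C_of_isEmpty⟩
    have := h (fun j => 1) (fun j => one_pos)
    simpa using this
  | succ n ih =>
    intro p h
    have key : ∀ y : Fin n → ℝ, (∀ j, 0 < y j) →
        Polynomial.map (eval y) (finSuccEquiv ℝ n p) = 0 := by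
      intro y hy
      apply Polynomial.eq_zero_of_infinite_isRoot
      apply Set.Infinite.mono (s := Set.Ioi (0:ℝ))
      · intro t ht
        simp only [Set.mem_setOf_eq, Polynomial.IsRoot]
        rw [← eval_eq_eval_mv_eval']
        exact h _ (fun j => Fin.cases ht hy j)
      · exact Set.Ioi_infinite 0
    have h2 : finSuccEquiv ℝ n p = 0 := by
      ext k m
      simp only [Polynomial.coeff_zero, coeff_zero]
      have : ∀ y : Fin n → ℝ, (∀ j, 0 < y j) → eval y ((finSuccEquiv ℝ n p).coeff k) = 0 := by
        intro y hy
        have := key y hy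
        have := congrArg (fun q => Polynomial.coeff q k) this
        simpa using this
      have := ih _ this
      rw [this]; simp
    have := congrArg (finSuccEquiv ℝ n).symm h2
    simpa using this

theorem hjb_implies_complex_balanced
    {d : ℕ} {ι : Type*} [Fintype ι] [DecidableEq (Fin d → ℕ)]
    (src tgt : ι → Fin d → ℕ) (κ : ι → ℝ) (hκ : ∀ i, 0 < κ i)
    (c : Fin d → ℝ) (hc : ∀ j, 0 < c j)
    (hhjb : ∀ x : Fin d → ℝ, (∀ j, 0 < x j) →
      crnH src tgt κ x (fun j => Real.log (x j / c j)) = 0) :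
    ∀ z : Fin d → ℕ,
      ∑ i ∈ univ.filter (fun i => tgt i = z), κ i * ∏ j, c j ^ src i j =
      ∑ i ∈ univ.filter (fun i => src i = z), κ i * ∏ j, c j ^ z j := by
  -- Step 1: transformed identity
  have step1 : ∀ y : Fin d → ℝ, (∀ j, 0 < y j) →
      ∑ i, κ i * (∏ j, c j ^ src i j) *
        ((∏ j, y j ^ tgt i j) - (∏ j, y j ^ src i j)) = 0 := by
    intro y hy
    have hx : ∀ j, 0 < y j * c j := fun j => mul_pos (hy j) (hc j)
    have := hhjb (fun j => y j * c j) hx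
    rw [crnH] at this
    rw [← this]
    apply Finset.sum_congr rfl
    intro i _
    have hrat : ∀ j, (y j * c j) / c j = y j := fun j =>
      mul_div_cancel_right₀ (y j) (ne_of_gt (hc j))
    have hexp : Real.exp (∑ j, ((tgt i j : ℝ) - (src i j : ℝ)) *
        Real.log ((y j * c j) / c j)) =
        (∏ j, y j ^ tgt i j) / (∏ j, y j ^ src i j) := by
      rw [Real.exp_sum, ← Finset.prod_div_distrib]
      apply Finset.prod_congr rfl
      intro j _
      rw [hrat j, sub_mul, Real.exp_sub, Real.exp_nat_mul, Real.exp_nat_mul,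
        Real.exp_log (hy j)]
    rw [hexp]
    have hA : (∏ j, y j ^ src i j) ≠ 0 :=
      Finset.prod_ne_zero_iff.2 fun j _ => pow_ne_zero _ (ne_of_gt (hy j))
    have hxa : (∏ j, (y j * c j) ^ src i j) =
        (∏ j, y j ^ src i j) * (∏ j, c j ^ src i j) := by
      rw [← Finset.prod_mul_distrib]
      exact Finset.prod_congr rfl fun j _ => mul_pow _ _ _
    rw [hxa]
    field_simp
  -- Step 2: polynomial
  set e : (Fin d → ℕ) ≃ (Fin d →₀ ℕ) := Finsupp.equivFunOnFinite.symm with he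
  set Q : MvPolynomial (Fin d) ℝ := ∑ i, MvPolynomial.C (κ i * ∏ j, c j ^ src i j) *
      (monomial (e (tgt i)) 1 - monomial (e (src i)) 1) with hQ
  have hevalmon : ∀ (y : Fin d → ℝ) (z : Fin d → ℕ),
      eval y ((monomial (e z)) (1:ℝ)) = ∏ j, y j ^ z j := by
    intro y z
    rw [eval_monomial, one_mul, Finsupp.prod_pow]
    exact Finset.prod_congr rfl fun j _ => by simp [he]
  have hQ0 : Q = 0 := by
    apply mv_zero_of_pos
    intro y hy
    rw [hQ, map_sum, ← step1 y hy]
    apply Finset.sum_congr rfl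
    intro i _
    rw [map_mul, map_sub, eval_C, hevalmon, hevalmon]
  intro z
  have hcoeff := congrArg (coeff (e z)) hQ0
  rw [hQ] at hcoeff
  simp only [coeff_sum, coeff_zero, mul_sub, coeff_sub, coeff_C_mul, coeff_monomial] at hcoeff
  have hinj : ∀ w : Fin d → ℕ, (e w = e z) ↔ w = z := fun w => e.apply_eq_iff_eq
  rw [Finset.sum_sub_distrib, sub_eq_zero] at hcoeff
  have lhs : ∑ i, (κ i * ∏ j, c j ^ src i j) * (if e (tgt i) = e z then (1:ℝ) else 0) =
      ∑ i ∈ univ.filter (fun i => tgt i = z), κ i * ∏ j, c j ^ src i j := by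
    rw [Finset.sum_filter]
    refine Finset.sum_congr rfl fun i _ => ?_
    simp only [hinj (tgt i)]
    split <;> simp
  have rhs : ∑ i, (κ i * ∏ j, c j ^ src i j) * (if e (src i) = e z then (1:ℝ) else 0) =
      ∑ i ∈ univ.filter (fun i => src i = z), κ i * ∏ j, c j ^ z j := by
    rw [Finset.sum_filter]
    refine Finset.sum_congr rfl fun i _ => ?_
    simp only [hinj (src i)]
    by_cases h : src i = z
    · subst h; simp
    · simp [h]
  rw [lhs, rhs] at hcoeff
  exact hcoeff
end

section
/- The Legendre transform of p ↦ x(e^{−p} − 1) + (e^p − 1) recovers the large-deviations local rate: for x > 0 and β ∈ ℝ, sup_{p∈ℝ} { pβ − x(e^{−p}−1) − (e^p−1) } = inf { x·ℓ(u/x) + ℓ(v) : u, v ≥ 0, v − u = β }, where ℓ(z) = z log z − z + 1, and both sides are finite. -/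
noncomputable def ell (z : ℝ) : ℝ := z * Real.log z - z + 1

lemma ell_tangent (z z₀ : ℝ) (hz : 0 ≤ z) (hz₀ : 0 < z₀) :
    ell z₀ + Real.log z₀ * (z - z₀) ≤ ell z := by
  rcases eq_or_lt_of_le hz with h | h
  · simp only [ell, ← h, Real.log_zero, mul_zero, zero_mul, sub_zero, zero_sub]
    nlinarith [hz₀]
  · have h1 : Real.log (z₀ / z) ≤ z₀ / z - 1 := Real.log_le_sub_one_of_pos (by positivity)
    have h2 : Real.log (z₀ / z) = Real.log z₀ - Real.log z :=
      Real.log_div (ne_of_gt hz₀) (ne_of_gt h)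
    have h3 : z * (Real.log z₀ - Real.log z) ≤ z₀ - z := by
      have := mul_le_mul_of_nonneg_left h1 h.le
      rw [h2] at this
      have h4 : z * (z₀ / z - 1) = z₀ - z := by field_simp
      linarith [h4 ▸ this]
    simp only [ell]
    nlinarith [h3]

theorem legendre_transform_local_rate (x β : ℝ) (hx : 0 < x) :
    ∃ M : ℝ,
      IsLUB {w : ℝ | ∃ p : ℝ,
          w = p * β - x * (Real.exp (-p) - 1) - (Real.exp p - 1)} M ∧
      IsGLB {w : ℝ | ∃ u v : ℝ, 0 ≤ u ∧ 0 ≤ v ∧ v - u = β ∧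
          w = x * ell (u / x) + ell v} M := by
  set d := Real.sqrt (β ^ 2 + 4 * x) with hd
  have hd2 : d ^ 2 = β ^ 2 + 4 * x := Real.sq_sqrt (by nlinarith)
  have hdnn : 0 ≤ d := Real.sqrt_nonneg _
  have hdβ : -β < d := by nlinarith
  set s := (β + d) / 2 with hs_def
  have hs : 0 < s := by rw [hs_def]; linarith
  have hs2 : s * s = β * s + x := by rw [hs_def]; nlinarith [hd2]
  have hβ : s - x / s = β := by field_simp; nlinarith [hs2]
  set M := β * Real.log s + x - x / s - s + 1 with hM
  refine ⟨M, ?_, ?_⟩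
  · apply IsGreatest.isLUB
    constructor
    · refine ⟨Real.log s, ?_⟩
      rw [Real.exp_neg, Real.exp_log hs, hM]
      field_simp
      ring
    · rintro w ⟨p, rfl⟩
      have h1 := Real.add_one_le_exp (p - Real.log s)
      rw [Real.exp_sub, Real.exp_log hs] at h1
      have e1 : (p - Real.log s + 1) * s ≤ Real.exp p := (le_div_iff₀ hs).mp h1
      have h2 := Real.add_one_le_exp (Real.log s + -p)
      rw [Real.exp_add, Real.exp_log hs] at h2
      have e2 : (Real.log s + -p + 1) * (x / s) ≤ x * Real.exp (-p) := by
        have := mul_le_mul_of_nonneg_left h2 (le_of_lt (div_pos hx hs))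
        calc (Real.log s + -p + 1) * (x / s) = (x / s) * (Real.log s + -p + 1) := by ring
        _ ≤ (x / s) * (s * Real.exp (-p)) := this
        _ = x * Real.exp (-p) := by field_simp
      have k1 : p * β = p * s - p * (x / s) := by rw [← hβ]; ring
      have k2 : β * Real.log s = Real.log s * s - Real.log s * (x / s) := by
        rw [← hβ]; ring
      rw [hM]
      nlinarith [e1, e2, k1, k2]
  · apply IsLeast.isGLB
    constructor
    · refine ⟨x / s, s, le_of_lt (div_pos hx hs), hs.le, hβ, ?_⟩
      have hxne : x ≠ 0 := ne_of_gt hx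
      have hinv : x / s / x = s⁻¹ := by field_simp
      rw [hinv, hM]
      simp only [ell, Real.log_inv]
      rw [← hβ]
      field_simp
      all_goals ring
    · rintro w ⟨u, v, hu, hv, huv, rfl⟩
      have h1 := ell_tangent (u / x) s⁻¹ (by positivity) (by positivity)
      have h2 := ell_tangent v s hv hs
      have h1' := mul_le_mul_of_nonneg_left h1 hx.le
      have eI : x * ell s⁻¹ = -(Real.log s * (x / s)) - x / s + x := by
        simp only [ell, Real.log_inv]; field_simp
      have eT : x * (Real.log s⁻¹ * (u / x - s⁻¹)) =
          Real.log s * (x / s) - Real.log s * u := by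
        rw [Real.log_inv]; field_simp; ring
      have kβ : β * Real.log s = Real.log s * v - Real.log s * u := by
        rw [← huv]; ring
      have eS : ell s = s * Real.log s - s + 1 := rfl
      rw [hM]
      nlinarith [h1', h2, eI, eT, kβ, eS]
end
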